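/- Let d be an integer with 1 ≤ d < q, write gcd(d,q) = p^j and d = (d_0 + d_1 p + … + d_{n-1} p^{n-1})·p^j with 0 ≤ d_i < p for i = 0,…,n−1 and d_0 d_{n-1} ≠ 0, and let f_d(X) = X^d ∈ F_q[X]. If (d_0+1)(d_1+1)⋯(d_{n-1}+1) ≤ p, then for any integer s with (d_0+1)(d_1+1)⋯(d_{n-1}+1) ≤ s ≤ q there exist a subset A ⊆ F_q of size s and a vector c ∈ F_p^s for which T(c, A, f_d) is empty. -/

import Mathlib

open Polynomial

/-- The Thue–Morse (sum-of-digits) function on `F` with respect to the ordered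
basis `B` of `F` over `F_p`. -/
noncomputable def TM {p r : ℕ} {F : Type*} [Field F] [Algebra (ZMod p) F]
    (B : Module.Basis (Fin r) (ZMod p) F) (ξ : F) : ZMod p :=
  ∑ i, B.repr ξ i

/-- The set `T(c, A, f)` where `A = {α 1, …, α s}` and `c = (c 1, …, c s)`. -/
noncomputable def TSet {p r s : ℕ} {F : Type*} [Field F] [Algebra (ZMod p) F]
    (B : Module.Basis (Fin r) (ZMod p) F) (c : Fin s → ZMod p) (α : Fin s → F)
    (f : Polynomial F) : Set F :=
  {ξ : F | ∀ i, TM B (f.eval (ξ + α i)) = c i}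

lemma sum_add_one_le_prod' (n : ℕ) (f : ℕ → ℕ) :
    (∑ i ∈ Finset.range n, f i) + 1 ≤ ∏ i ∈ Finset.range n, (f i + 1) := by
  induction n with
  | zero => simp
  | succ n ih =>
    rw [Finset.sum_range_succ, Finset.prod_range_succ]
    have h2 : (∑ i ∈ Finset.range n, f i + 1) * (f n + 1)
        ≤ (∏ i ∈ Finset.range n, (f i + 1)) * (f n + 1) := Nat.mul_le_mul_right _ ih
    have h3 : (∑ i ∈ Finset.range n, f i + 1) * (f n + 1)
        = (∑ i ∈ Finset.range n, f i) * f n + (∑ i ∈ Finset.range n, f i + f n + 1) := by ring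
    omega

lemma ofDigits_replicate_zero' (p j : ℕ) :
    Nat.ofDigits p (List.replicate j 0) = 0 := by
  induction j with
  | zero => simp
  | succ j ih => simp [List.replicate_succ, Nat.ofDigits_cons, ih]

lemma ofDigits_ofFn' (p : ℕ) : ∀ (n : ℕ) (f : ℕ → ℕ),
    Nat.ofDigits p (List.ofFn (fun i : Fin n => f i)) = ∑ i ∈ Finset.range n, f i * p ^ i := by
  intro n
  induction n with
  | zero => simp
  | succ n ih =>
    intro f
    rw [List.ofFn_succ, Nat.ofDigits_cons, Finset.sum_range_succ']
    simp only [Fin.val_succ, Fin.val_zero]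
    have h1 : ∀ i, f (i + 1) * p ^ (i + 1) = p * (f (i + 1) * p ^ i) := fun i => by ring
    rw [Finset.sum_congr rfl fun i _ => h1 i, ← Finset.mul_sum, ih (fun i => f (i + 1))]
    ring

/-- digit sum zero implies zero -/
lemma digitsum_eq_zero' {p k : ℕ} (hp : 2 ≤ p) (h : (Nat.digits p k).sum = 0) : k = 0 := by
  by_contra hk
  have hne : Nat.digits p k ≠ [] := Nat.digits_ne_nil_iff_ne_zero.mpr hk
  have hlast := Nat.getLast_digit_ne_zero p hk
  have hmem := List.getLast_mem hne
  have := (List.sum_eq_zero_iff.mp h) _ hmem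
  exact hlast this

lemma zmod2_eq_one' : ∀ u : ZMod 2, u ≠ 0 → u = 1 := by decide

/-- exponent reduction modulo digit sums in `ZMod p` -/
lemma pow_digitsum' {p : ℕ} [Fact p.Prime] (t : ZMod p) (k : ℕ) :
    t ^ k = t ^ (Nat.digits p k).sum := by
  have hp : p.Prime := Fact.out
  by_cases ht : t = 0
  · subst ht
    by_cases hk : k = 0
    · subst hk; simp
    · rw [zero_pow hk, zero_pow (fun hc => hk (digitsum_eq_zero' hp.two_le hc))]
  · have hord : t ^ (p - 1) = 1 := ZMod.pow_card_sub_one_eq_one ht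
    have hred : ∀ m : ℕ, t ^ m = t ^ (m % (p - 1)) := by
      intro m
      conv_lhs => rw [← Nat.div_add_mod m (p - 1)]
      rw [pow_add, pow_mul, hord, one_pow, one_mul]
    rcases eq_or_lt_of_le hp.two_le with h2 | h3
    · have h2' : p = 2 := h2.symm
      subst h2'
      rw [zmod2_eq_one' t ht]; simp
    · have hmodp : p % (p - 1) = 1 := by
        have h1 : p = (p - 1) + 1 := by omega
        calc p % (p - 1) = ((p - 1) + 1) % (p - 1) := by rw [← h1]
          _ = 1 % (p - 1) := Nat.add_mod_left _ _
          _ = 1 := Nat.mod_eq_of_lt (by omega)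
      have hmod : k ≡ (Nat.digits p k).sum [MOD p - 1] :=
        Nat.modEq_digits_sum (p - 1) p hmodp k
      rw [hred k, hred ((Nat.digits p k).sum)]
      exact congrArg (fun e => t ^ e) hmod

/-- Kummer-type inequality -/
lemma kummer_le' {p : ℕ} [Fact p.Prime] {d k : ℕ} (hk : k ≤ d)
    (hne : ((d.choose k : ZMod p)) ≠ 0) :
    (Nat.digits p k).sum + (Nat.digits p (d - k)).sum ≤ (Nat.digits p d).sum := by
  have hdvd : ¬ p ∣ d.choose k := fun hdvd =>
    hne ((ZMod.natCast_eq_zero_iff _ _).mpr hdvd)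
  have hval : padicValNat p (d.choose k) = 0 := padicValNat.eq_zero_of_not_dvd hdvd
  have h := sub_one_mul_padicValNat_choose_eq_sub_sum_digits (p := p) hk
  rw [hval, mul_zero] at h
  omega

theorem stmt1 {p r : ℕ} [Fact p.Prime] (hr : 0 < r)
    {F : Type*} [Field F] [Fintype F] [Algebra (ZMod p) F]
    (hF : Fintype.card F = p ^ r) (B : Module.Basis (Fin r) (ZMod p) F)
    (d j n : ℕ) (dig : ℕ → ℕ)
    (hd1 : 1 ≤ d) (hdq : d < p ^ r)
    (hgcd : Nat.gcd d (p ^ r) = p ^ j)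
    (hdrep : d = (∑ i ∈ Finset.range n, dig i * p ^ i) * p ^ j)
    (hdig : ∀ i < n, dig i < p) (hn : 1 ≤ n)
    (hd0 : dig 0 ≠ 0) (hdtop : dig (n - 1) ≠ 0)
    (hD : (∏ i ∈ Finset.range n, (dig i + 1)) ≤ p)
    (s : ℕ) (hs1 : (∏ i ∈ Finset.range n, (dig i + 1)) ≤ s) (hs2 : s ≤ p ^ r) :
    ∃ α : Fin s → F, Function.Injective α ∧ ∃ c : Fin s → ZMod p,
      TSet B c α (X ^ d : Polynomial F) = ∅ := by
  classical
  have hp : p.Prime := Fact.out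
  haveI : NeZero p := ⟨hp.ne_zero⟩
  set Dn := ∏ i ∈ Finset.range n, (dig i + 1) with hDn
  -- the base-p digits of d
  have hofn : (List.ofFn (fun i : Fin n => dig i)) ≠ [] := by
    have : (List.ofFn (fun i : Fin n => dig i)).length = n := List.length_ofFn
    intro hc
    rw [hc] at this
    simp at this
    omega
  have hdigits : Nat.digits p d = List.replicate j 0 ++ List.ofFn (fun i : Fin n => dig i) := by
    have hofd : Nat.ofDigits p (List.replicate j 0 ++ List.ofFn (fun i : Fin n => dig i)) = d := by
      rw [Nat.ofDigits_append, ofDigits_replicate_zero', ofDigits_ofFn', List.length_replicate]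
      rw [hdrep]; ring
    rw [← hofd]
    refine (Nat.digits_ofDigits p hp.one_lt _ ?_ ?_)
    · intro l hl
      rcases List.mem_append.mp hl with h | h
      · rw [List.eq_of_mem_replicate h]; exact hp.pos
      · rw [List.mem_ofFn] at h
        obtain ⟨i, hi⟩ := h
        rw [← hi]
        exact hdig i i.isLt
    · intro hne
      rw [List.getLast_append_of_ne_nil _ hofn, List.getLast_ofFn]
      simpa using hdtop
  have hsum : (Nat.digits p d).sum = ∑ i ∈ Finset.range n, dig i := by
    rw [hdigits, List.sum_append, List.sum_replicate, List.sum_ofFn,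
      Fin.sum_univ_eq_sum_range]
    simp
  set Kd := (Nat.digits p d).sum with hKd
  have hKD : Kd + 1 ≤ Dn := by
    rw [hsum, hDn]
    exact sum_add_one_le_prod' n dig
  -- TM as a linear map
  let L : F →ₗ[ZMod p] ZMod p :=
    { toFun := TM B
      map_add' := by
        intro x y
        simp [TM, map_add, Finsupp.add_apply, Finset.sum_add_distrib]
      map_smul' := by
        intro c x
        simp [TM, map_smul, Finsupp.smul_apply, smul_eq_mul, Finset.mul_sum] }
  have hLdef : ∀ x : F, L x = TM B x := fun _ => rfl
  -- the basic expansion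
  set Φ : ℕ → F → ZMod p := fun m ξ =>
    ∑ k ∈ (Finset.range (d + 1)).filter (fun k => (Nat.digits p (d - k)).sum = m),
      (d.choose k : ZMod p) * TM B (ξ ^ k) with hΦ
  have hexp : ∀ (t : ZMod p) (ξ : F),
      TM B ((ξ + algebraMap (ZMod p) F t) ^ d)
        = ∑ k ∈ Finset.range (d + 1),
            t ^ ((Nat.digits p (d - k)).sum) * ((d.choose k : ZMod p) * TM B (ξ ^ k)) := by
    intro t ξ
    rw [add_pow]
    have hterm : ∀ k ∈ Finset.range (d + 1),
        ξ ^ k * (algebraMap (ZMod p) F t) ^ (d - k) * (d.choose k : F)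
          = (t ^ (d - k) * (d.choose k : ZMod p)) • ξ ^ k := by
      intro k _
      rw [← map_pow, ← map_natCast (algebraMap (ZMod p) F) (d.choose k),
        Algebra.smul_def, map_mul]
      ring
    rw [Finset.sum_congr rfl hterm, ← hLdef, map_sum]
    refine Finset.sum_congr rfl fun k _ => ?_
    rw [map_smul, smul_eq_mul, hLdef, pow_digitsum' t (d - k)]
    ring
  -- regrouping by digit sums
  have hfib : ∀ (t : ZMod p) (ξ : F),
      TM B ((ξ + algebraMap (ZMod p) F t) ^ d)
        = ∑ m ∈ Finset.range (Kd + 1), t ^ m * Φ m ξ := by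
    intro t ξ
    rw [hexp t ξ]
    have hsmall : ((Finset.range (d + 1)).filter
          (fun k => (Nat.digits p (d - k)).sum < Kd + 1)).sum
          (fun k => t ^ ((Nat.digits p (d - k)).sum) * ((d.choose k : ZMod p) * TM B (ξ ^ k)))
        = ∑ k ∈ Finset.range (d + 1),
            t ^ ((Nat.digits p (d - k)).sum) * ((d.choose k : ZMod p) * TM B (ξ ^ k)) := by
      refine Finset.sum_filter_of_ne ?_
      intro k hk hne
      have hb : ((d.choose k : ZMod p)) ≠ 0 := by
        intro hc
        rw [hc, zero_mul, mul_zero] at hne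
        exact hne rfl
      have hkle : k ≤ d := Nat.lt_succ_iff.mp (Finset.mem_range.mp hk)
      have := kummer_le' (p := p) hkle hb
      omega
    have hdouble := Finset.sum_fiberwise_of_maps_to
      (s := (Finset.range (d + 1)).filter (fun k => (Nat.digits p (d - k)).sum < Kd + 1))
      (t := Finset.range (Kd + 1))
      (g := fun k => (Nat.digits p (d - k)).sum)
      (fun k hk => Finset.mem_range.mpr (Finset.mem_filter.mp hk).2)
      (fun k => t ^ ((Nat.digits p (d - k)).sum) * ((d.choose k : ZMod p) * TM B (ξ ^ k)))
    rw [← hsmall, ← hdouble]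
    refine Finset.sum_congr rfl fun m hm => ?_
    have hmK : m < Kd + 1 := Finset.mem_range.mp hm
    have hsetseq : ((Finset.range (d + 1)).filter
          (fun k => (Nat.digits p (d - k)).sum < Kd + 1)).filter
          (fun k => (Nat.digits p (d - k)).sum = m)
        = (Finset.range (d + 1)).filter (fun k => (Nat.digits p (d - k)).sum = m) := by
      rw [Finset.filter_filter]
      refine Finset.filter_congr fun k _ => ?_
      constructor
      · exact fun h => h.2
      · exact fun h => ⟨by omega, h⟩
    rw [hsetseq]
    simp only [hΦ]
    rw [Finset.mul_sum]
    refine Finset.sum_congr rfl fun k hk => ?_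
    rw [(Finset.mem_filter.mp hk).2]
  -- the top coefficient is constant
  have hΦK : ∀ ξ : F, Φ Kd ξ = TM B 1 := by
    intro ξ
    simp only [hΦ]
    rw [Finset.sum_eq_single_of_mem 0 (by
        refine Finset.mem_filter.mpr ⟨Finset.mem_range.mpr (by omega), ?_⟩
        simp [hKd]) ?_]
    · simp
    · intro k hk hkne
      by_cases hb : ((d.choose k : ZMod p)) = 0
      · rw [hb, zero_mul]
      · exfalso
        obtain ⟨hkr, hfk⟩ := Finset.mem_filter.mp hk
        have hkle : k ≤ d := Nat.lt_succ_iff.mp (Finset.mem_range.mp hkr)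
        have h := kummer_le' (p := p) hkle hb
        have hspk : (Nat.digits p k).sum = 0 := by omega
        exact hkne (digitsum_eq_zero' hp.two_le hspk)
  -- the span
  set One : F → ZMod p := fun _ => (1 : ZMod p) with hOne
  set G : Fin (Kd + 1) → (F → ZMod p) :=
    fun m => if (m : ℕ) < Kd then Φ m else One with hG
  set W : Submodule (ZMod p) (F → ZMod p) :=
    Submodule.span (ZMod p) (Set.range G) with hW
  have hOneW : One ∈ W := by
    have h1 : G (Fin.last Kd) = One := by simp [hG]
    exact h1 ▸ Submodule.subset_span (Set.mem_range_self _)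
  have hhW : ∀ t : ZMod p,
      (fun ξ : F => TM B ((ξ + algebraMap (ZMod p) F t) ^ d)) ∈ W := by
    intro t
    have hfun : (fun ξ : F => TM B ((ξ + algebraMap (ZMod p) F t) ^ d))
        = (∑ m ∈ Finset.range Kd, (t ^ m) • Φ m) + (t ^ Kd * TM B 1) • One := by
      funext ξ
      rw [hfib t ξ, Finset.sum_range_succ]
      simp only [Pi.add_apply, Pi.smul_apply, Finset.sum_apply, smul_eq_mul, hΦK ξ, hOne]
      ring
    rw [hfun]
    refine W.add_mem (Submodule.sum_mem _ fun m hm => ?_) (W.smul_mem _ hOneW)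
    have hmK : (m : ℕ) < Kd := Finset.mem_range.mp hm
    have hGm : Φ m = G ⟨m, Nat.lt_succ_of_lt hmK⟩ := by simp [hG, hmK]
    exact hGm ▸ W.smul_mem _ (Submodule.subset_span (Set.mem_range_self _))
  haveI : FiniteDimensional (ZMod p) ↥W :=
    FiniteDimensional.span_of_finite _ (Set.finite_range G)
  have hfr : Module.finrank (ZMod p) ↥W ≤ Kd + 1 := by
    have h := finrank_range_le_card (R := ZMod p) G
    rw [Fintype.card_fin] at h
    exact h
  -- choose Dn distinct scalars
  have hD1 : 1 ≤ Dn := by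
    rw [hDn]
    exact Nat.one_le_iff_ne_zero.mpr (Finset.prod_ne_zero_iff.mpr fun i _ => by omega)
  obtain ⟨T0, hT0sub, hT0card⟩ := Finset.exists_subset_card_eq
    (show Dn ≤ (Finset.univ : Finset (ZMod p)).card by
      rw [Finset.card_univ, ZMod.card]; exact hD)
  set tOf : Fin Dn → ZMod p :=
    fun i => ((T0.equivFin.symm (finCongr hT0card.symm i)) : ZMod p) with htOf
  have htInj : Function.Injective tOf := by
    intro i j hij
    have h1 := Subtype.coe_injective hij
    have h2 := T0.equivFin.symm.injective h1
    exact (finCongr hT0card.symm).injective h2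
  set aF : Fin Dn → F := fun i => algebraMap (ZMod p) F (tOf i) with haF
  have haInj : Function.Injective aF :=
    fun i j hij => htInj ((algebraMap (ZMod p) F).injective hij)
  -- the dependent family
  set v : Fin (Dn + 1) → (F → ZMod p) := fun i =>
    if hi : (i : ℕ) < Dn then (fun ξ : F => TM B ((ξ + aF ⟨i, hi⟩) ^ d)) else One with hv
  have hvW : ∀ i, v i ∈ W := by
    intro i
    simp only [hv]
    by_cases hi : (i : ℕ) < Dn
    · rw [dif_pos hi]; exact hhW (tOf ⟨i, hi⟩)
    · rw [dif_neg hi]; exact hOneW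
  set v' : Fin (Dn + 1) → ↥W := fun i => ⟨v i, hvW i⟩ with hv'
  have hnli : ¬ LinearIndependent (ZMod p) v' := by
    intro hli
    have h := hli.fintype_card_le_finrank
    rw [Fintype.card_fin] at h
    omega
  obtain ⟨g, hg0, ie, hgie⟩ := Fintype.not_linearIndependent_iff.mp hnli
  have hrel : ∑ i, g i • v i = (0 : F → ZMod p) := by
    have h := congrArg (Subtype.val) hg0
    rw [Submodule.coe_sum] at h
    simpa [hv'] using h
  have hrelev : ∀ ξ : F, ∑ i : Fin (Dn + 1), g i * v i ξ = 0 := by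
    intro ξ
    have h := congrFun hrel ξ
    simpa [Finset.sum_apply, Pi.smul_apply, smul_eq_mul] using h
  -- find an index below Dn with nonzero coefficient
  have hex : ∃ i0 : Fin (Dn + 1), (i0 : ℕ) < Dn ∧ g i0 ≠ 0 := by
    by_contra hcon
    push_neg at hcon
    have hrel0 := hrelev 0
    rw [Fin.sum_univ_castSucc] at hrel0
    have hz : ∀ i : Fin Dn, g i.castSucc * v i.castSucc 0 = 0 := by
      intro i
      rw [hcon i.castSucc (by simp [Fin.is_lt]), zero_mul]
    rw [Finset.sum_congr rfl (fun i _ => hz i), Finset.sum_const_zero, zero_add] at hrel0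
    have hvlast : v (Fin.last Dn) = One := by
      simp only [hv]; rw [dif_neg (by simp)]
    rw [hvlast] at hrel0
    have hglast : g (Fin.last Dn) = 0 := by simpa [hOne] using hrel0
    rcases Nat.lt_or_ge (ie : ℕ) Dn with h | h
    · exact hgie (hcon ie h)
    · have : ie = Fin.last Dn := Fin.ext (by
        have := ie.isLt
        simp only [Fin.val_last]
        omega)
      exact hgie (this ▸ hglast)
  obtain ⟨iD, hiD, hgiD⟩ := hex
  set k0 : Fin Dn := ⟨iD, hiD⟩ with hk0
  set u : ZMod p := (g iD)⁻¹ * (1 - g (Fin.last Dn)) with hu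
  -- build the set A
  set A0 : Finset F := Finset.image aF Finset.univ with hA0
  have hA0card : A0.card = Dn := by
    rw [hA0, Finset.card_image_of_injective _ haInj, Finset.card_univ, Fintype.card_fin]
  obtain ⟨A, hA0A, _, hAcard⟩ := Finset.exists_subsuperset_card_eq (n := s)
    (Finset.subset_univ A0) (by rw [hA0card]; exact hs1)
    (by rw [Finset.card_univ, hF]; exact hs2)
  set α : Fin s → F := fun i => ((A.equivFin.symm (finCongr hAcard.symm i)) : F) with hα
  have hαinj : Function.Injective α := by
    intro i j hij
    have h1 := Subtype.coe_injective hij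
    have h2 := A.equivFin.symm.injective h1
    exact (finCongr hAcard.symm).injective h2
  have hαsurj : ∀ x ∈ A, ∃ i, α i = x := by
    intro x hx
    obtain ⟨y, hy⟩ := A.equivFin.symm.surjective ⟨x, hx⟩
    refine ⟨finCongr hAcard y, ?_⟩
    simp only [hα]
    have hyy : finCongr hAcard.symm (finCongr hAcard y) = y := by
      apply Fin.ext; simp
    rw [hyy, hy]
  set c : Fin s → ZMod p := fun i => if α i = aF k0 then u else 0 with hc
  refine ⟨α, hαinj, c, ?_⟩
  rw [Set.eq_empty_iff_forall_notMem]
  intro ξ hξ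
  have hξ' : ∀ i, TM B ((ξ + α i) ^ d) = c i := by
    intro i
    have h := hξ i
    simpa using h
  -- values at the special points
  have hval : ∀ k : Fin Dn, TM B ((ξ + aF k) ^ d) = if k = k0 then u else 0 := by
    intro k
    have hmem : aF k ∈ A := hA0A (by rw [hA0]; exact Finset.mem_image_of_mem aF (Finset.mem_univ k))
    obtain ⟨i, hi⟩ := hαsurj (aF k) hmem
    have h := hξ' i
    rw [hi] at h
    rw [h]
    simp only [hc]
    by_cases hk : k = k0
    · rw [hi, if_pos (by rw [hk]), if_pos hk]
    · rw [hi, if_neg (fun hcc => hk (haInj hcc)), if_neg hk]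
  -- plug into the linear relation
  have hrelξ := hrelev ξ
  rw [Fin.sum_univ_castSucc] at hrelξ
  have hvc : ∀ i : Fin Dn, v i.castSucc ξ = if i = k0 then u else 0 := by
    intro i
    have hlt : ((i.castSucc : Fin (Dn + 1)) : ℕ) < Dn := by simp [Fin.is_lt]
    have hvi : v i.castSucc = (fun ξ : F => TM B ((ξ + aF ⟨(i.castSucc : ℕ), hlt⟩) ^ d)) := by
      simp only [hv]; rw [dif_pos hlt]
    have hidx : (⟨((i.castSucc : Fin (Dn + 1)) : ℕ), hlt⟩ : Fin Dn) = i := by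
      apply Fin.ext; simp
    rw [hvi]
    simp only [hidx]
    exact hval i
  have hsum2 : ∑ i : Fin Dn, g i.castSucc * v i.castSucc ξ = g k0.castSucc * u := by
    rw [Finset.sum_congr rfl (fun i _ => by rw [hvc i])]
    simp only [mul_ite, mul_zero]
    rw [Finset.sum_ite_eq' Finset.univ k0 (fun i => g i.castSucc * u)]
    simp
  have hvlastξ : v (Fin.last Dn) ξ = 1 := by
    simp only [hv]; rw [dif_neg (by simp)]
  rw [hsum2, hvlastξ, mul_one] at hrelξ
  have hcast : k0.castSucc = iD := by
    apply Fin.ext; simp [hk0]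
  rw [hcast] at hrelξ
  rw [hu, ← mul_assoc, mul_inv_cancel₀ hgiD, one_mul] at hrelξ
  have : (1 : ZMod p) = 0 := by
    have := hrelξ
    ring_nf at this ⊢
    linear_combination this
  exact one_ne_zero this
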